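/- arXiv:2511.05447 — 4 statements merged into one kernel-verified Lean document; each statement's English description precedes it below -/
import Mathlib

section
/- Let ν denote the unique positive real root of the quartic ν⁴ + 4ν³ − 6ν² + 12ν − 3 = 0. For n ∈ ℤ and k ∈ ℕ define λ_{n,k} = ((4k+2)|n| + 4k(k+1))·(3 + 6ν² − ν⁴)/(4(1+ν²)) + n²(3+ν²)²/((1+ν²)(3−ν²)). Then λ_{0,0} = 0, and λ_{n,k} > 3 for every (n,k) ≠ (0,0). -/
/-- The eigenvalues `λ_{n,k}` of the Laplacian on the minimal Berger sphere `Σ₀`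
in the Page metric (normalized by `Ric(g) = 3g`). -/
noncomputable def pageLam (ν : ℝ) (n : ℤ) (k : ℕ) : ℝ :=
  ((4*(k:ℝ) + 2) * |(n:ℝ)| + 4*(k:ℝ)*((k:ℝ)+1)) * (3 + 6*ν^2 - ν^4) / (4*(1 + ν^2))
    + (n:ℝ)^2 * (3 + ν^2)^2 / ((1 + ν^2) * (3 - ν^2))

/-- Let `ν` be the unique positive real root of `ν⁴ + 4ν³ − 6ν² + 12ν − 3 = 0`.
Then `λ_{0,0} = 0` and `λ_{n,k} > 3` for every `(n,k) ≠ (0,0)`. -/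
theorem page_stability_index_one (ν : ℝ) (hν : 0 < ν)
    (hroot : ν^4 + 4*ν^3 - 6*ν^2 + 12*ν - 3 = 0)
    (huniq : ∀ μ : ℝ, 0 < μ → μ^4 + 4*μ^3 - 6*μ^2 + 12*μ - 3 = 0 → μ = ν) :
    pageLam ν 0 0 = 0 ∧
    ∀ (n : ℤ) (k : ℕ), (n, k) ≠ ((0 : ℤ), (0 : ℕ)) → 3 < pageLam ν n k := by
  have h1 : ν < 1 := by
    nlinarith [sq_nonneg ν, sq_nonneg (ν - 1), sq_nonneg (ν^2 - 1), sq_nonneg (ν + 1),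
      mul_pos hν hν, sq_nonneg (ν^2 + ν)]
  have hd1 : (0:ℝ) < 1 + ν^2 := by positivity
  have hd2 : (0:ℝ) < 3 - ν^2 := by nlinarith
  set A : ℝ := (3 + 6*ν^2 - ν^4) / (4*(1 + ν^2)) with hAdef
  set B : ℝ := (3 + ν^2)^2 / ((1 + ν^2) * (3 - ν^2)) with hBdef
  have hA : 3/8 < A := by
    rw [hAdef, lt_div_iff₀ (by positivity)]
    nlinarith [sq_nonneg ν, pow_pos hν 4]
  have hB : 3 < B := by
    rw [hBdef, lt_div_iff₀ (by positivity)]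
    nlinarith [pow_pos hν 4]
  constructor
  · unfold pageLam
    norm_num
  · intro n k hnk
    have key : pageLam ν n k =
        ((4*(k:ℝ) + 2) * |(n:ℝ)| + 4*(k:ℝ)*((k:ℝ)+1)) * A + (n:ℝ)^2 * B := by
      unfold pageLam
      rw [hAdef, hBdef, mul_div_assoc, mul_div_assoc]
    rw [key]
    have hk0 : (0:ℝ) ≤ (k:ℝ) := Nat.cast_nonneg k
    rcases eq_or_ne n 0 with hn | hn
    · subst hn
      have hk : k ≠ 0 := by simpa using hnk
      have hk1 : (1:ℝ) ≤ (k:ℝ) := by exact_mod_cast Nat.one_le_iff_ne_zero.mpr hk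
      simp only [Int.cast_zero, abs_zero, mul_zero, zero_mul, zero_add, ne_eq]
      have hApos : (0:ℝ) ≤ A := le_trans (by norm_num) hA.le
      have h8 : (8:ℝ) ≤ 4*(k:ℝ)*((k:ℝ)+1) := by nlinarith
      have := mul_le_mul_of_nonneg_right h8 hApos
      nlinarith [hB, hA]
    · have ha : (1:ℝ) ≤ |(n:ℝ)| := by
        have := Int.one_le_abs (by simpa using hn : n ≠ 0)
        calc (1:ℝ) ≤ (|n| : ℤ) := by exact_mod_cast this
          _ = |(n:ℝ)| := by push_cast; rfl
      have hn2 : (1:ℝ) ≤ (n:ℝ)^2 := by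
        have h := sq_abs (n:ℝ)
        nlinarith [ha]
      have hApos : (0:ℝ) ≤ A := le_trans (by norm_num) hA.le
      have hBpos : (0:ℝ) ≤ B := by linarith
      have hm : (2:ℝ) ≤ (4*(k:ℝ) + 2) * |(n:ℝ)| + 4*(k:ℝ)*((k:ℝ)+1) := by
        nlinarith [mul_nonneg hk0 (abs_nonneg ((n:ℝ))), mul_nonneg hk0 hk0]
      have h2A := mul_le_mul_of_nonneg_right hm hApos
      have hnB : B ≤ (n:ℝ)^2 * B := le_mul_of_one_le_left hBpos hn2
      linarith
end

section
/- For every b ∈ (0,1), the cubic H(y) = b + 6y − 15y² + 8y³ has exactly three real roots, all simple: exactly one in the interval (−1/8, 0), exactly one in the interval (1/4, 1), and exactly one in the interval (1, ∞); in particular H has exactly one negative root. -/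
private lemma ypq_ivt (b : ℝ) (u v : ℝ) (huv : u ≤ v)
    (h1 : b + 6*u - 15*u^2 + 8*u^3 < 0) (h2 : 0 < b + 6*v - 15*v^2 + 8*v^3) :
    ∃ r ∈ Set.Ioo u v, b + 6*r - 15*r^2 + 8*r^3 = 0 := by
  have hc : ContinuousOn (fun y : ℝ => b + 6*y - 15*y^2 + 8*y^3) (Set.Icc u v) := by
    fun_prop
  have := intermediate_value_Ioo huv hc (Set.mem_Ioo.2 ⟨h1, h2⟩)
  obtain ⟨r, hr, hr0⟩ := this
  exact ⟨r, hr, hr0⟩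

private lemma ypq_ivt' (b : ℝ) (u v : ℝ) (huv : u ≤ v)
    (h1 : 0 < b + 6*u - 15*u^2 + 8*u^3) (h2 : b + 6*v - 15*v^2 + 8*v^3 < 0) :
    ∃ r ∈ Set.Ioo u v, b + 6*r - 15*r^2 + 8*r^3 = 0 := by
  have hc : ContinuousOn (fun y : ℝ => b + 6*y - 15*y^2 + 8*y^3) (Set.Icc u v) := by
    fun_prop
  have := intermediate_value_Ioo' huv hc (Set.mem_Ioo.2 ⟨h2, h1⟩)
  obtain ⟨r, hr, hr0⟩ := this
  exact ⟨r, hr, hr0⟩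

/-- For every `b ∈ (0,1)`, the cubic `H(y) = b + 6y − 15y² + 8y³` has exactly
three real roots, all simple (witnessed by the factorization
`H(y) = 8(y − r₁)(y − r₂)(y − r₃)` with `r₁, r₂, r₃` pairwise distinct):
exactly one root in `(−1/8, 0)`, exactly one in `(1/4, 1)`, and exactly one in
`(1, ∞)`; in particular `H` has exactly one negative root. -/
theorem ypq_H_roots :
    ∀ b ∈ Set.Ioo (0 : ℝ) 1, ∃ r₁ r₂ r₃ : ℝ,
      r₁ ∈ Set.Ioo (-1/8 : ℝ) 0 ∧ r₂ ∈ Set.Ioo (1/4 : ℝ) 1 ∧ r₃ ∈ Set.Ioi (1 : ℝ) ∧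
      (∀ y : ℝ, b + 6*y - 15*y^2 + 8*y^3 = 8*(y - r₁)*(y - r₂)*(y - r₃)) ∧
      (∀ y : ℝ, b + 6*y - 15*y^2 + 8*y^3 = 0 ↔ (y = r₁ ∨ y = r₂ ∨ y = r₃)) ∧
      (∀ y : ℝ, y < 0 → b + 6*y - 15*y^2 + 8*y^3 = 0 → y = r₁) := by
  rintro b ⟨hb0, hb1⟩
  obtain ⟨r₁, hr₁m, hr₁⟩ := ypq_ivt b (-1/8) 0 (by norm_num) (by nlinarith) (by nlinarith)
  obtain ⟨r₂, hr₂m, hr₂⟩ := ypq_ivt' b (1/4) 1 (by norm_num) (by nlinarith) (by nlinarith)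
  obtain ⟨r₃, hr₃m, hr₃⟩ := ypq_ivt b 1 2 (by norm_num) (by nlinarith) (by nlinarith)
  have hne : r₁ ≠ r₂ := by
    have h1 := hr₁m.2; have h2 := hr₂m.1; intro h; rw [h] at h1; linarith
  -- divided-difference relation
  have hA : 6 - 15*(r₁+r₂) + 8*(r₁^2 + r₁*r₂ + r₂^2) = 0 := by
    have hmul : (r₁ - r₂) * (6 - 15*(r₁+r₂) + 8*(r₁^2 + r₁*r₂ + r₂^2)) = 0 := by
      linear_combination hr₁ - hr₂
    rcases mul_eq_zero.1 hmul with h | h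
    · exact absurd (sub_eq_zero.1 h) hne
    · exact h
  have key : ∀ y : ℝ, b + 6*y - 15*y^2 + 8*y^3
      = 8*(y - r₁)*(y - r₂)*(y - (15/8 - r₁ - r₂)) := by
    intro y
    linear_combination hr₁ + (y - r₁) * hA
  -- r₃ equals the third Vieta root
  have h3 : r₃ = 15/8 - r₁ - r₂ := by
    have := key r₃
    rw [hr₃] at this
    have h1 : r₃ - r₁ ≠ 0 := by
      have := hr₁m.2; have := hr₃m.1; intro h; nlinarith [sub_eq_zero.1 h]
    have h2 : r₃ - r₂ ≠ 0 := by
      have := hr₂m.2; have := hr₃m.1; intro h; nlinarith [sub_eq_zero.1 h]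
    have hprod : 8*(r₃ - r₁)*(r₃ - r₂)*(r₃ - (15/8 - r₁ - r₂)) = 0 := this.symm
    have h8 : (8:ℝ)*(r₃ - r₁)*(r₃ - r₂) ≠ 0 := by
      exact mul_ne_zero (mul_ne_zero (by norm_num) h1) h2
    have := (mul_eq_zero.1 hprod).resolve_left h8
    linarith [sub_eq_zero.1 this]
  have key' : ∀ y : ℝ, b + 6*y - 15*y^2 + 8*y^3 = 8*(y - r₁)*(y - r₂)*(y - r₃) := by
    intro y; rw [h3]; exact key y
  refine ⟨r₁, r₂, r₃, ⟨hr₁m.1, hr₁m.2⟩, ⟨hr₂m.1, hr₂m.2⟩, hr₃m.1, key', ?_, ?_⟩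
  · intro y
    rw [key' y]
    constructor
    · intro h
      rcases mul_eq_zero.1 h with h | h
      · rcases mul_eq_zero.1 h with h | h
        · rcases mul_eq_zero.1 h with h | h
          · norm_num at h
          · exact Or.inl (sub_eq_zero.1 h)
        · exact Or.inr (Or.inl (sub_eq_zero.1 h))
      · exact Or.inr (Or.inr (sub_eq_zero.1 h))
    · rintro (rfl | rfl | rfl) <;> ring
  · intro y hy hroot
    have := (key' y).symm.trans hroot
    rcases mul_eq_zero.1 this with h | h
    · rcases mul_eq_zero.1 h with h | h
      · rcases mul_eq_zero.1 h with h | h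
        · norm_num at h
        · exact sub_eq_zero.1 h
      · exfalso; have := hr₂m.1; have := sub_eq_zero.1 h; linarith
    · exfalso; have := hr₃m.1; have := sub_eq_zero.1 h; linarith
end

section
/- Let k ∈ ℕ with k ≥ 1, let N_ψ, N_φ ∈ ℤ, set n_ψ = N_ψ − N_φ, n_φ = N_ψ + N_φ, J = k + (|n_ψ| + |n_φ|)/2, E = J(J+1), and let y be a real number with −1/8 < y < 0. Then E − N_ψ² − 1 + 4y > 1/2 > 0. -/
/-- For `k ≥ 1`, `N_ψ, N_φ ∈ ℤ`, with `n_ψ = N_ψ − N_φ`, `n_φ = N_ψ + N_φ`,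
`J = k + (|n_ψ| + |n_φ|)/2`, `E = J(J+1)`, and `y ∈ (−1/8, 0)`, one has
`E − N_ψ² − 1 + 4y > 1/2 > 0`. -/
theorem ypq_k_ge_one_stable (k : ℕ) (hk : 1 ≤ k) (Nψ Nφ : ℤ)
    (y : ℝ) (hy1 : -1/8 < y) (hy2 : y < 0) :
    let nψ : ℝ := (Nψ : ℝ) - (Nφ : ℝ)
    let nφ : ℝ := (Nψ : ℝ) + (Nφ : ℝ)
    let J : ℝ := (k : ℝ) + (|nψ| + |nφ|)/2
    let E : ℝ := J * (J + 1)
    1/2 < E - (Nψ : ℝ)^2 - 1 + 4*y ∧ (0 : ℝ) < 1/2 := by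
  intro nψ nφ J E
  refine ⟨?_, by norm_num⟩
  have hk' : (1 : ℝ) ≤ (k : ℝ) := by exact_mod_cast hk
  have h1 : 2 * |(Nψ : ℝ)| ≤ |nψ| + |nφ| := by
    have := abs_add_le nψ nφ
    have hsum : nψ + nφ = 2 * (Nψ : ℝ) := by simp [nψ, nφ]; ring
    rw [hsum] at this
    calc 2 * |(Nψ : ℝ)| = |2 * (Nψ : ℝ)| := by rw [abs_mul]; norm_num
    _ ≤ |nψ| + |nφ| := this
  have h2 : |(Nψ : ℝ)| ^ 2 = (Nψ : ℝ) ^ 2 := sq_abs _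
  have h3 : (0:ℝ) ≤ |nψ| := abs_nonneg _
  have h4 : (0:ℝ) ≤ |nφ| := abs_nonneg _
  have h5 : (0:ℝ) ≤ |(Nψ : ℝ)| := abs_nonneg _
  show 1/2 < J * (J + 1) - (Nψ : ℝ)^2 - 1 + 4*y
  have hJ : (1 : ℝ) + |(Nψ : ℝ)| ≤ J := by
    simp only [J]; linarith
  clear_value nψ nφ J E
  have h6 : (1 + |(Nψ:ℝ)|) * (2 + |(Nψ:ℝ)|) ≤ J * (J + 1) :=
    mul_le_mul hJ (by linarith) (by positivity) (by linarith)
  have h7 : (1 + |(Nψ:ℝ)|) * (2 + |(Nψ:ℝ)|) = |(Nψ:ℝ)|^2 + 3*|(Nψ:ℝ)| + 2 := by ring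
  have h8 : (Nψ:ℝ)^2 + 3*|(Nψ:ℝ)| + 2 ≤ J * (J + 1) := by rw [← h2, ← h7]; exact h6
  linarith [h8]
end

section
/- Let ε ∈ (0,1), let q be a positive integer, let m be an integer with q·|m| ≥ 2, and let y be a real number with −1/8 < y < 0. Then q²m²·((√(4 − 3ε²) + 3ε² − 2)/ε²)² − 6(1 − 4y)/(1 − y) > 0. -/
/-- Let `ε ∈ (0,1)`, `q` a positive integer, `m` an integer with `q·|m| ≥ 2`,
and `y ∈ (−1/8, 0)`. Then
`q²m²·((√(4 − 3ε²) + 3ε² − 2)/ε²)² − 6(1 − 4y)/(1 − y) > 0`. -/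
theorem ypq_alpha_modes_stable (ε : ℝ) (hε : ε ∈ Set.Ioo (0 : ℝ) 1)
    (q : ℕ) (hq : 0 < q) (m : ℤ) (hm : 2 ≤ (q : ℤ) * |m|)
    (y : ℝ) (hy1 : -1/8 < y) (hy2 : y < 0) :
    0 < (q : ℝ)^2 * (m : ℝ)^2 * ((Real.sqrt (4 - 3*ε^2) + 3*ε^2 - 2)/ε^2)^2
        - 6*(1 - 4*y)/(1 - y) := by
  obtain ⟨hε0, hε1⟩ := hε
  have hs : (0:ℝ) < ε^2 := by positivity
  have hs1 : ε^2 < 1 := by nlinarith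
  -- √(4 - 3ε²) ≥ 2 - ε²
  have hsq : 2 - ε^2 ≤ Real.sqrt (4 - 3*ε^2) := by
    have h1 : (2 - ε^2)^2 ≤ 4 - 3*ε^2 := by nlinarith
    have h2 : (0:ℝ) ≤ 2 - ε^2 := by nlinarith
    nlinarith [Real.sq_sqrt (by nlinarith : (0:ℝ) ≤ 4 - 3*ε^2),
      Real.sqrt_nonneg (4 - 3*ε^2)]
  set t : ℝ := (Real.sqrt (4 - 3*ε^2) + 3*ε^2 - 2)/ε^2 with ht
  have htge : 2 ≤ t := by
    rw [ht, le_div_iff₀ hs]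
    nlinarith
  -- q²m² ≥ 4
  have hqm : (2:ℝ) ≤ (q:ℝ) * |(m:ℝ)| := by
    have : ((2:ℤ):ℝ) ≤ (((q:ℤ) * |m| : ℤ) : ℝ) := by exact_mod_cast hm
    push_cast at this
    simpa using this
  have hqm2 : (4:ℝ) ≤ (q:ℝ)^2 * (m:ℝ)^2 := by
    have h := mul_le_mul hqm hqm (by norm_num) (by positivity)
    have habs : |(m:ℝ)|^2 = (m:ℝ)^2 := sq_abs _
    nlinarith [abs_nonneg (m:ℝ)]
  have h16 : (16:ℝ) ≤ (q:ℝ)^2 * (m:ℝ)^2 * t^2 := by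
    nlinarith
  have hy' : (0:ℝ) < 1 - y := by linarith
  have hrhs : 6*(1 - 4*y)/(1 - y) < 9 := by
    rw [div_lt_iff₀ hy']
    linarith
  linarith
end
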